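/- Let (Ω, μ) be a probability space, J ∈ [0, 1], and b₁, b₂ ≥ 1 integers. For an integer b ≥ 1 write c_b = 1/2^b and P_b = c_b + (1 − c_b)·J. Let X, Y : Ω → ℝ be random variables taking values in {0, 1} with E[X] = P_{b₁}, E[Y] = P_{b₂}, and E[X·Y] = P_{b₁+b₂}. Then Cov(X, Y) = P_{b₁+b₂} − P_{b₁}·P_{b₂}, and in particular Cov(X, Y) ≥ 0. -/

import Mathlib

open MeasureTheory ProbabilityTheory

/-- Covariance of the collision indicators on two disjoint bit-chunks:
`Cov(X, Y) = P_{b₁+b₂} − P_{b₁}·P_{b₂} ≥ 0`, where `P_b = 1/2^b + (1 − 1/2^b)·J`,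
`E[X] = P_{b₁}`, `E[Y] = P_{b₂}` and `E[X·Y] = P_{b₁+b₂}`. -/
theorem chunk_covariance {Ω : Type*} [MeasurableSpace Ω]
    (μ : Measure Ω) [IsProbabilityMeasure μ]
    (J : ℝ) (hJ : J ∈ Set.Icc (0 : ℝ) 1) (b₁ b₂ : ℕ) (hb₁ : 1 ≤ b₁) (hb₂ : 1 ≤ b₂)
    (X Y : Ω → ℝ) (hXmeas : Measurable X) (hYmeas : Measurable Y)
    (hX01 : ∀ ω, X ω = 0 ∨ X ω = 1) (hY01 : ∀ ω, Y ω = 0 ∨ Y ω = 1)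
    (hXmean : ∫ ω, X ω ∂μ = 1 / 2 ^ b₁ + (1 - 1 / 2 ^ b₁) * J)
    (hYmean : ∫ ω, Y ω ∂μ = 1 / 2 ^ b₂ + (1 - 1 / 2 ^ b₂) * J)
    (hXY : ∫ ω, X ω * Y ω ∂μ = 1 / 2 ^ (b₁ + b₂) + (1 - 1 / 2 ^ (b₁ + b₂)) * J) :
    (∫ ω, (X ω - ∫ x, X x ∂μ) * (Y ω - ∫ x, Y x ∂μ) ∂μ
        = (1 / 2 ^ (b₁ + b₂) + (1 - 1 / 2 ^ (b₁ + b₂)) * J)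
            - (1 / 2 ^ b₁ + (1 - 1 / 2 ^ b₁) * J) * (1 / 2 ^ b₂ + (1 - 1 / 2 ^ b₂) * J)) ∧
    0 ≤ ∫ ω, (X ω - ∫ x, X x ∂μ) * (Y ω - ∫ x, Y x ∂μ) ∂μ := by
  set a := ∫ x, X x ∂μ with ha
  set c := ∫ x, Y x ∂μ with hc
  have hXi : Integrable X μ := by
    apply (integrable_const (1 : ℝ)).mono' hXmeas.aestronglyMeasurable
    filter_upwards with ω
    rcases hX01 ω with h | h <;> simp [h]
  have hYi : Integrable Y μ := by
    apply (integrable_const (1 : ℝ)).mono' hYmeas.aestronglyMeasurable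
    filter_upwards with ω
    rcases hY01 ω with h | h <;> simp [h]
  have hXYi : Integrable (fun ω => X ω * Y ω) μ := by
    apply (integrable_const (1 : ℝ)).mono' (hXmeas.mul hYmeas).aestronglyMeasurable
    filter_upwards with ω
    rcases hX01 ω with h | h <;> rcases hY01 ω with h' | h' <;> simp [h, h']
  have key : ∫ ω, (X ω - a) * (Y ω - c) ∂μ
      = (∫ ω, X ω * Y ω ∂μ) - a * c := by
    have : ∀ ω, (X ω - a) * (Y ω - c)
        = X ω * Y ω - a * Y ω - c * X ω + a * c := by intro ω; ring
    simp only [this]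
    rw [integral_add, integral_sub, integral_sub, integral_const_mul, integral_const_mul,
      integral_const, probReal_univ]
    · simp only [← ha, ← hc, ENNReal.toReal_one, smul_eq_mul, one_mul]
      ring
    · exact hXYi
    · exact hYi.const_mul a
    · exact (hXYi.sub (hYi.const_mul a))
    · exact hXi.const_mul c
    · exact ((hXYi.sub (hYi.const_mul a)).sub (hXi.const_mul c))
    · exact integrable_const _
  have heq : ∫ ω, (X ω - a) * (Y ω - c) ∂μ
      = (1 / 2 ^ (b₁ + b₂) + (1 - 1 / 2 ^ (b₁ + b₂)) * J)
        - (1 / 2 ^ b₁ + (1 - 1 / 2 ^ b₁) * J) * (1 / 2 ^ b₂ + (1 - 1 / 2 ^ b₂) * J) := by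
    rw [key, hXY, hXmean, hYmean]
  refine ⟨heq, ?_⟩
  rw [heq]
  obtain ⟨hJ0, hJ1⟩ := hJ
  have h1 : (1 : ℝ) / 2 ^ b₁ ≤ 1 := by
    rw [div_le_one (by positivity)]
    exact one_le_pow₀ one_le_two
  have h2 : (1 : ℝ) / 2 ^ b₂ ≤ 1 := by
    rw [div_le_one (by positivity)]
    exact one_le_pow₀ one_le_two
  have hpow : (2 : ℝ) ^ (b₁ + b₂) = 2 ^ b₁ * 2 ^ b₂ := pow_add 2 b₁ b₂
  have hp1 : (0:ℝ) < 2 ^ b₁ := by positivity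
  have hp2 : (0:ℝ) < 2 ^ b₂ := by positivity
  have h12 : (1 : ℝ) / 2 ^ (b₁ + b₂) = (1 / 2 ^ b₁) * (1 / 2 ^ b₂) := by
    rw [hpow]; field_simp
  rw [h12]
  nlinarith [mul_nonneg (mul_nonneg (sub_nonneg.2 h1) (sub_nonneg.2 h2)) (mul_nonneg hJ0 (sub_nonneg.2 hJ1))]
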